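/- Let k ≥ 2 be an integer, n := 2^k, and for j ∈ ℤ set z_j := e^{2πij/n}. Then for every odd integer j, the Rudin–Shapiro polynomials satisfy |P_k(z_j)|² − n = n − 4·|P_{k−2}(z_j)|². -/

import Mathlib

open Polynomial

/-- The Rudin–Shapiro polynomial pair `(P_k, Q_k)`, defined recursively by
`P_0 = Q_0 = 1`, `P_{k+1} = P_k + X^{2^k} Q_k`, `Q_{k+1} = P_k - X^{2^k} Q_k`. -/
noncomputable def RS : ℕ → Polynomial ℂ × Polynomial ℂ
  | 0 => (1, 1)
  | k + 1 => ((RS k).1 + X ^ (2 ^ k) * (RS k).2, (RS k).1 - X ^ (2 ^ k) * (RS k).2)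

lemma RS_abs_sq_sum (m : ℕ) (z : ℂ) (hz : ‖z‖ = 1) :
    ‖((RS m).1).eval z‖^2 + ‖((RS m).2).eval z‖^2
      = 2 ^ (m + 1) := by
  induction m with
  | zero => norm_num [RS]
  | succ m ih =>
    have hzz : Complex.normSq (z ^ 2 ^ m) = 1 := by
      rw [← Complex.sq_norm]
      simp [hz]
    simp only [RS, Polynomial.eval_add, Polynomial.eval_sub, Polynomial.eval_mul,
      Polynomial.eval_pow, Polynomial.eval_X, Complex.sq_norm] at *
    rw [Complex.normSq_add, Complex.normSq_sub, Complex.normSq_mul, hzz]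
    ring_nf
    ring_nf at ih
    linarith

theorem rudin_shapiro_P_odd_node_reflection (k : ℕ) (hk : 2 ≤ k) (j : ℤ) (hj : Odd j)
    (z : ℂ) (hz : z = Complex.exp (Complex.I * (2 * Real.pi * j / (2 : ℝ) ^ k))) :
    ‖((RS k).1).eval z‖^2 - (2 : ℝ)^k
      = (2 : ℝ)^k - 4 * ‖((RS (k - 2)).1).eval z‖^2 := by
  obtain ⟨m, rfl⟩ : ∃ m, k = m + 2 := ⟨k - 2, by omega⟩
  have habs : ‖z‖ = 1 := by
    rw [hz]
    have h0 : Complex.I * (2 * Real.pi * j / (2 : ℝ) ^ (m + 2))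
        = ((2 * Real.pi * j / (2 : ℝ) ^ (m + 2) : ℝ) : ℂ) * Complex.I := by
      push_cast; ring
    rw [h0, Complex.norm_exp]
    simp only [Complex.mul_re, Complex.ofReal_re, Complex.ofReal_im, Complex.I_re,
      Complex.I_im]
    norm_num
  have hneg : z ^ 2 ^ (m + 1) = -1 := by
    rw [hz, ← Complex.exp_nat_mul]
    have harg : (2 ^ (m + 1) : ℕ) * (Complex.I * (2 * Real.pi * j / (2 : ℝ) ^ (m + 2)))
        = (j : ℂ) * (Real.pi * Complex.I) := by
      have h2 : ((2 : ℝ) ^ (m + 2) : ℂ) = (2 : ℂ) ^ (m + 2) := by push_cast; ring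
      rw [h2]
      have hne : (2 : ℂ) ^ (m + 2) ≠ 0 := pow_ne_zero _ two_ne_zero
      field_simp
      push_cast
      ring
    rw [harg, Complex.exp_int_mul, Complex.exp_pi_mul_I, Odd.neg_one_zpow hj]
  have key : ((RS (m + 2)).1).eval z = 2 * (z ^ 2 ^ m * ((RS m).2).eval z) := by
    simp only [RS, Polynomial.eval_add, Polynomial.eval_sub, Polynomial.eval_mul,
      Polynomial.eval_pow, Polynomial.eval_X, hneg]
    ring
  have hQ : ‖((RS (m + 2)).1).eval z‖
      = 2 * ‖((RS m).2).eval z‖ := by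
    rw [key]
    simp [map_mul, map_pow, habs]
  have hsum := RS_abs_sq_sum m z habs
  have hmm : m + 2 - 2 = m := by omega
  rw [hmm, hQ]
  have : ((2 : ℝ) * ‖((RS m).2).eval z‖) ^ 2
      = 4 * ‖((RS m).2).eval z‖ ^ 2 := by ring
  rw [this]
  have h1 : ‖((RS m).2).eval z‖^2
      = 2 ^ (m + 1) - ‖((RS m).1).eval z‖^2 := by linarith
  rw [h1]
  ring
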